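/- For every integer n ≥ 1, real r ∈ (1,∞), and f ∈ L^r(ℝ^n) (real-valued), if ∫_{ℝ^n} f · (ψ - Δψ) dx = 0 for all compactly supported smooth functions ψ on ℝ^n (where Δ is the Laplacian), then f = 0 almost everywhere. -/

import Mathlib

open MeasureTheory

/-- The Euclidean Laplacian of `ψ : ℝⁿ → ℝ`, `Δψ = ∑ i ∂²ψ/∂x_i²`. -/
noncomputable def euclideanLaplacian {n : ℕ} (ψ : EuclideanSpace ℝ (Fin n) → ℝ)
    (x : EuclideanSpace ℝ (Fin n)) : ℝ :=
  ∑ i : Fin n, iteratedFDeriv ℝ 2 ψ x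
    ![EuclideanSpace.single i (1 : ℝ), EuclideanSpace.single i (1 : ℝ)]

open Filter

section Aux



lemma second_deriv_test {g g' g'' : ℝ → ℝ}
    (hg' : ∀ t, HasDerivAt g (g' t) t) (hg'' : ∀ t, HasDerivAt g' (g'' t) t)
    (hcont : Continuous g'') (hmax : ∀ t, g t ≤ g 0) : g'' 0 ≤ 0 := by
  by_contra h
  push_neg at h
  have hd0 : g' 0 = 0 := by
    have hlm : IsLocalMax g 0 := Filter.Eventually.of_forall hmax
    have := hlm.deriv_eq_zero
    rwa [(hg' 0).deriv] at this
  obtain ⟨δ, hδ, hball'⟩ := Metric.continuous_iff.mp hcont 0 (g'' 0) h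
  have hball : ∀ t, dist t 0 < δ → 0 < g'' t := by
    intro t ht
    have := hball' t ht
    rw [Real.dist_eq] at this
    linarith [(abs_lt.mp this).1]
  have hmono' : StrictMonoOn g' (Set.Icc 0 (δ/2)) := by
    apply strictMonoOn_of_deriv_pos (convex_Icc _ _)
      (Continuous.continuousOn (continuous_iff_continuousAt.mpr fun t => (hg'' t).continuousAt))
    intro t ht
    rw [(hg'' t).deriv]
    rw [interior_Icc] at ht
    apply hball
    rw [Real.dist_eq, sub_zero, abs_of_nonneg (le_of_lt ht.1)]
    linarith [ht.2]
  have hmono2 : StrictMonoOn g (Set.Icc 0 (δ/2)) := by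
    apply strictMonoOn_of_deriv_pos (convex_Icc _ _)
      (Continuous.continuousOn (continuous_iff_continuousAt.mpr fun t => (hg' t).continuousAt))
    intro t ht
    rw [(hg' t).deriv]
    rw [interior_Icc] at ht
    have := hmono' ⟨le_refl 0, by linarith⟩ ⟨le_of_lt ht.1, le_of_lt ht.2⟩ ht.1
    linarith [hd0]
  have := hmono2 ⟨le_refl _, by linarith⟩ ⟨by linarith, le_refl _⟩ (by linarith)
  linarith [hmax (δ/2)]

variable {n : ℕ}
local notation "E" => EuclideanSpace ℝ (Fin n)




lemma lap_eq (ψ : E → ℝ) (x : E) :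
    euclideanLaplacian ψ x = ∑ i : Fin n,
      fderiv ℝ (fderiv ℝ ψ) x (EuclideanSpace.single i (1:ℝ)) (EuclideanSpace.single i (1:ℝ)) := by
  unfold euclideanLaplacian
  refine Finset.sum_congr rfl fun i _ => ?_
  rw [iteratedFDeriv_two_apply]
  simp

lemma hasFDerivAt_sub_const_left (x z : E) :
    HasFDerivAt (fun y : E => x - y) (-(ContinuousLinearMap.id ℝ (EuclideanSpace ℝ (Fin n)))) z := by
  simpa using (hasFDerivAt_const (𝕜 := ℝ) x z).fun_sub (hasFDerivAt_id z)

lemma refl_fderiv {ρ : E → ℝ} (hρ : ContDiff ℝ (⊤ : ℕ∞) ρ) (x : E) :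
    fderiv ℝ (fun z => ρ (x - z)) = fun z => -(fderiv ℝ ρ (x - z)) := by
  funext z
  have h1 := ((hρ.differentiable (by simp)) (x - z)).hasFDerivAt.comp z
    (hasFDerivAt_sub_const_left x z)
  have h2 : (fderiv ℝ ρ (x - z)).comp (-(ContinuousLinearMap.id ℝ (EuclideanSpace ℝ (Fin n))))
      = -(fderiv ℝ ρ (x - z)) := by
    ext w; simp
  rw [← h2]
  exact h1.fderiv

lemma refl_lap {ρ : E → ℝ} (hρ : ContDiff ℝ (⊤ : ℕ∞) ρ) (x y : E) :
    euclideanLaplacian (fun z => ρ (x - z)) y = euclideanLaplacian ρ (x - y) := by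
  rw [lap_eq, lap_eq]
  refine Finset.sum_congr rfl fun i _ => ?_
  rw [refl_fderiv hρ x]
  set G := fderiv ℝ ρ with hG
  have hGd : Differentiable ℝ G :=
    (hρ.fderiv_right (m := (⊤:ℕ∞)) (mod_cast le_top)).differentiable (by simp)
  have h1 : HasFDerivAt (fun z => G (x - z))
      ((fderiv ℝ G (x - y)).comp (-(ContinuousLinearMap.id ℝ (EuclideanSpace ℝ (Fin n))))) y :=
    (hGd (x - y)).hasFDerivAt.comp y (hasFDerivAt_sub_const_left x y)
  have h2 : HasFDerivAt (fun z => -(G (x - z)))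
      (-((fderiv ℝ G (x - y)).comp (-(ContinuousLinearMap.id ℝ (EuclideanSpace ℝ (Fin n)))))) y :=
    h1.neg
  rw [h2.fderiv]
  simp


noncomputable def bar (x : E) : ℝ := ∑ i : Fin n, Real.cosh (x i)

noncomputable def barD (x : E) : EuclideanSpace ℝ (Fin n) →L[ℝ] ℝ :=
  ∑ i : Fin n, Real.sinh (x i) • (EuclideanSpace.proj i : E →L[ℝ] ℝ)

lemma hasFDerivAt_bar (x : E) : HasFDerivAt bar (barD x) x := by
  apply HasFDerivAt.fun_sum
  intro i _
  exact ((EuclideanSpace.proj (𝕜 := ℝ) i).hasFDerivAt (x := x)).cosh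

noncomputable def barD2 (x : E) : E →L[ℝ] (E →L[ℝ] ℝ) :=
  ∑ i : Fin n, (Real.cosh (x i) • (EuclideanSpace.proj i : E →L[ℝ] ℝ)).smulRight
    (EuclideanSpace.proj i : E →L[ℝ] ℝ)

lemma hasFDerivAt_barD (x : E) : HasFDerivAt (barD (n := n)) (barD2 x) x := by
  apply HasFDerivAt.fun_sum
  intro i _
  exact (((EuclideanSpace.proj (𝕜 := ℝ) i).hasFDerivAt (x := x)).sinh).smul_const (EuclideanSpace.proj i : E →L[ℝ] ℝ)

lemma fderiv_bar : fderiv ℝ (bar (n := n)) = barD := funext fun x => (hasFDerivAt_bar x).fderiv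

lemma fderiv2_bar_apply (x : E) (i : Fin n) :
    fderiv ℝ (fderiv ℝ (bar (n := n))) x (EuclideanSpace.single i (1:ℝ)) (EuclideanSpace.single i (1:ℝ))
      = Real.cosh (x i) := by
  rw [fderiv_bar, (hasFDerivAt_barD x).fderiv]
  unfold barD2
  rw [ContinuousLinearMap.sum_apply, ContinuousLinearMap.sum_apply]
  have hproj : ∀ j : Fin n, (EuclideanSpace.proj j : E →L[ℝ] ℝ) (EuclideanSpace.single i (1:ℝ))
      = if j = i then 1 else 0 := by
    intro j
    simp [EuclideanSpace.single_apply]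
  calc (∑ j : Fin n, ((((Real.cosh (x j) • (EuclideanSpace.proj j : E →L[ℝ] ℝ)).smulRight
        (EuclideanSpace.proj j : E →L[ℝ] ℝ)) (EuclideanSpace.single i (1:ℝ)))
        (EuclideanSpace.single i (1:ℝ))))
      = ∑ j : Fin n, (if j = i then Real.cosh (x j) else 0) := by
        refine Finset.sum_congr rfl fun j _ => ?_
        rw [ContinuousLinearMap.smulRight_apply, ContinuousLinearMap.smul_apply, hproj j,
          ContinuousLinearMap.smul_apply, hproj j]
        by_cases h : j = i <;> simp [h]
    _ = Real.cosh (x i) := by simp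

lemma barD2_apply (x : E) (i : Fin n) :
    barD2 x (EuclideanSpace.single i (1:ℝ)) (EuclideanSpace.single i (1:ℝ)) = Real.cosh (x i) := by
  have := fderiv2_bar_apply x i
  rwa [fderiv_bar, (hasFDerivAt_barD x).fderiv] at this

lemma barD2_eq : barD2 (n := n) = fun x => ∑ i : Fin n,
    Real.cosh (x i) • ((EuclideanSpace.proj i : E →L[ℝ] ℝ).smulRight (EuclideanSpace.proj i)) := by
  funext x
  unfold barD2
  refine Finset.sum_congr rfl fun i _ => ?_
  ext v w
  simp [smul_smul]

lemma continuous_barD2 : Continuous (barD2 (n := n)) := by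
  rw [barD2_eq]
  haveI : ContinuousAdd (E →L[ℝ] E →L[ℝ] ℝ) :=
    ⟨(inferInstance : IsTopologicalAddGroup (E →L[ℝ] E →L[ℝ] ℝ)).toContinuousAdd.continuous_add⟩
  exact continuous_finset_sum _ fun i _ =>
    (Real.continuous_cosh.comp ((EuclideanSpace.proj (𝕜 := ℝ) i).continuous)).smul continuous_const

lemma cosh_ge_half_abs (t : ℝ) : |t| / 2 ≤ Real.cosh t := by
  rw [Real.cosh_eq]
  rcases le_or_gt 0 t with h | h
  · have h1 : t + 1 ≤ Real.exp t := Real.add_one_le_exp t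
    have h2 : (0:ℝ) < Real.exp (-t) := Real.exp_pos _
    rw [abs_of_nonneg h]
    linarith
  · have h1 : (-t) + 1 ≤ Real.exp (-t) := Real.add_one_le_exp _
    have h2 : (0:ℝ) < Real.exp t := Real.exp_pos _
    rw [abs_of_neg h]
    linarith

lemma bar_nonneg (x : E) : 0 ≤ bar x :=
  Finset.sum_nonneg fun i _ => le_trans (by positivity) (Real.one_le_cosh (x i))

lemma norm_le_two_bar (x : E) : ‖x‖ ≤ 2 * bar x := by
  have h1 : ‖x‖ ≤ ∑ i : Fin n, |x i| := by
    rw [EuclideanSpace.norm_eq]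
    simp only [Real.norm_eq_abs, sq_abs]
    have h2 : ∑ i : Fin n, x i ^ 2 ≤ (∑ i : Fin n, |x i|) ^ 2 := by
      rw [sq (∑ i : Fin n, |x i|), Finset.mul_sum]
      refine Finset.sum_le_sum fun i _ => ?_
      have : |x i| ≤ ∑ j : Fin n, |x j| :=
        Finset.single_le_sum (fun j _ => abs_nonneg (x j)) (Finset.mem_univ i)
      calc x i ^ 2 = |x i| * |x i| := by rw [← abs_mul, ← sq, abs_sq]
        _ ≤ (∑ j : Fin n, |x j|) * |x i| :=
            mul_le_mul_of_nonneg_right this (abs_nonneg _)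
    calc Real.sqrt (∑ i : Fin n, x i ^ 2) ≤ Real.sqrt ((∑ i : Fin n, |x i|) ^ 2) :=
          Real.sqrt_le_sqrt h2
      _ = ∑ i : Fin n, |x i| := Real.sqrt_sq (Finset.sum_nonneg fun i _ => abs_nonneg _)
  calc ‖x‖ ≤ ∑ i : Fin n, |x i| := h1
    _ ≤ ∑ i : Fin n, 2 * Real.cosh (x i) :=
        Finset.sum_le_sum fun i _ => by linarith [cosh_ge_half_abs (x i)]
    _ = 2 * bar x := by rw [bar, Finset.mul_sum]
set_option maxHeartbeats 2000000 in
lemma liouville_half {u : E → ℝ} (hu : ContDiff ℝ (⊤ : ℕ∞) u) {C : ℝ} (hC : ∀ x, u x ≤ C)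
    (heq : ∀ x, u x = ∑ i : Fin n,
      fderiv ℝ (fderiv ℝ u) x (EuclideanSpace.single i (1:ℝ)) (EuclideanSpace.single i (1:ℝ))) :
    ∀ y, u y ≤ 0 := by
  have hdu : Differentiable ℝ u := hu.differentiable (by simp)
  have hfd1 : ContDiff ℝ (⊤ : ℕ∞) (fderiv ℝ u) := by
    exact (hu.fderiv_right (m := (⊤ : ℕ∞)) (by exact_mod_cast le_top))
  have hdu2 : Differentiable ℝ (fderiv ℝ u) := hfd1.differentiable (by simp)
  have hcontD2 : Continuous (fderiv ℝ (fderiv ℝ u)) := by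
    exact ((hfd1.fderiv_right (m := (0 : ℕ∞)) (by exact_mod_cast le_top))).continuous
  have key : ∀ ε : ℝ, 0 < ε → ∀ y, u y ≤ ε * bar y := by
    intro ε hε y
    set v : E → ℝ := fun x => u x - ε * bar x with hv
    set w : E → (E →L[ℝ] ℝ) := fun x => fderiv ℝ u x - ε • barD x with hw
    set w2 : E → (E →L[ℝ] (E →L[ℝ] ℝ)) := fun x => fderiv ℝ (fderiv ℝ u) x - ε • barD2 x with hw2
    have hvder : ∀ x, HasFDerivAt v (w x) x := fun x =>
      (hdu x).hasFDerivAt.sub ((hasFDerivAt_bar x).const_smul ε)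
    have hwder : ∀ x, HasFDerivAt w (w2 x) x := fun x =>
      (hdu2 x).hasFDerivAt.sub ((hasFDerivAt_barD x).const_smul ε)
    have hw2cont : Continuous w2 := by
      exact hcontD2.sub (continuous_barD2.const_smul ε)
    -- coercivity
    have hcoerc : Tendsto v (cocompact _) atBot := by
      have h1 : Tendsto (fun x : E => (ε/2) * ‖x‖) (cocompact _) atTop :=
        tendsto_norm_cocompact_atTop.const_mul_atTop (by linarith)
      have h2 : Tendsto (fun x : E => C - (ε/2) * ‖x‖) (cocompact _) atBot := by
        have := (tendsto_neg_atTop_atBot.comp h1)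
        have h3 := tendsto_atBot_add_const_left (Filter.cocompact E) C this
        exact h3.congr (fun x => by simp [sub_eq_add_neg])
      apply tendsto_atBot_mono _ h2
      intro x
      have hb := norm_le_two_bar x
      have hc := hC x
      simp only [hv]
      nlinarith
    have hvc : Continuous v := (hu.continuous).sub (continuous_const.mul (by
      exact continuous_finset_sum _ fun i _ =>
        Real.continuous_cosh.comp (EuclideanSpace.proj (𝕜 := ℝ) i).continuous))
    obtain ⟨x₀, hx₀⟩ := hvc.exists_forall_ge hcoerc
    -- second derivative test in each direction
    have hdir : ∀ i : Fin n,
        w2 x₀ (EuclideanSpace.single i (1:ℝ)) (EuclideanSpace.single i (1:ℝ)) ≤ 0 := by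
      intro i
      set e : E := EuclideanSpace.single i (1:ℝ) with he
      set l : ℝ → E := fun t => x₀ + t • e with hl
      have hlder : ∀ t, HasDerivAt l e t := by
        intro t
        simpa [hl] using ((hasDerivAt_id t).smul_const e).const_add x₀
      have hlcont : Continuous l := continuous_const.add (continuous_id.smul continuous_const)
      have hl0 : l 0 = x₀ := by simp [hl]
      set A : (E →L[ℝ] ℝ) →L[ℝ] ℝ := ContinuousLinearMap.apply ℝ ℝ e with hA
      have h1 : ∀ t, HasDerivAt (fun t => v (l t)) (w (l t) e) t := fun t =>
        (hvder (l t)).comp_hasDerivAt t (hlder t)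
      have h2 : ∀ t, HasDerivAt (fun t => w (l t) e) (w2 (l t) e e) t := by
        intro t
        exact (A.hasFDerivAt.comp (l t) (hwder (l t))).comp_hasDerivAt t (hlder t)
      have h3 : Continuous (fun t => w2 (l t) e e) := by
        exact (ContinuousLinearMap.apply ℝ ℝ e).continuous.comp
          (((ContinuousLinearMap.apply ℝ (E →L[ℝ] ℝ) e).continuous.comp hw2cont).comp hlcont)
      have hmax : ∀ t, v (l t) ≤ v (l 0) := fun t => by rw [hl0]; exact hx₀ (l t)
      have := second_deriv_test h1 h2 h3 hmax
      rwa [hl0] at this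
    -- sum up
    have hsum : v x₀ ≤ 0 := by
      have h4 : ∑ i : Fin n, w2 x₀ (EuclideanSpace.single i (1:ℝ)) (EuclideanSpace.single i (1:ℝ)) ≤ 0 :=
        Finset.sum_nonpos fun i _ => hdir i
      have h6 : ∀ i : Fin n, w2 x₀ (EuclideanSpace.single i (1:ℝ)) (EuclideanSpace.single i (1:ℝ))
          = fderiv ℝ (fderiv ℝ u) x₀ (EuclideanSpace.single i (1:ℝ)) (EuclideanSpace.single i (1:ℝ))
            - ε * Real.cosh (x₀ i) := by
        intro i
        rw [hw2]
        simp only [ContinuousLinearMap.sub_apply, ContinuousLinearMap.smul_apply, smul_eq_mul,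
          barD2_apply]
      have h5 : ∑ i : Fin n, w2 x₀ (EuclideanSpace.single i (1:ℝ)) (EuclideanSpace.single i (1:ℝ))
          = u x₀ - ε * bar x₀ := by
        rw [Finset.sum_congr rfl fun i _ => h6 i, Finset.sum_sub_distrib, ← heq x₀,
          ← Finset.mul_sum]
        unfold bar
        rfl
      rw [hv]
      simp only
      rw [← h5]
      exact h4
    have := hx₀ y
    simp only [hv] at this hsum ⊢
    linarith
  intro y
  by_contra h
  push_neg at h
  have hb := bar_nonneg y
  set B := bar y + 1 with hB
  have hBpos : 0 < B := by linarith
  have hεpos : 0 < u y / (2*B) := by positivity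
  have h1 := key _ hεpos y
  have h2 : u y / (2*B) * bar y ≤ u y / (2*B) * B := by
    apply mul_le_mul_of_nonneg_left (by linarith) (le_of_lt hεpos)
  have h3 : u y / (2*B) * B = u y / 2 := by field_simp
  linarith
section Conv
variable {f ρ : EuclideanSpace ℝ (Fin n) → ℝ} (hfl : LocallyIntegrable f volume)
  (hρ : ContDiff ℝ (⊤ : ℕ∞) ρ) (hρc : HasCompactSupport ρ)
include hfl hρ hρc

set_option synthInstance.maxHeartbeats 400000 in

lemma conv_lap (x : EuclideanSpace ℝ (Fin n)) :
    euclideanLaplacian (convolution f ρ (ContinuousLinearMap.mul ℝ ℝ) volume) x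
    = ∫ t, f t * euclideanLaplacian ρ (x - t) := by
  have hfd2 : fderiv ℝ (fderiv ℝ (convolution f ρ (ContinuousLinearMap.mul ℝ ℝ) volume))
      = convolution (𝕜 := ℝ) f (fderiv ℝ (fderiv ℝ ρ))
        (((ContinuousLinearMap.mul ℝ ℝ).precompR (EuclideanSpace ℝ (Fin n))).precompR
          (EuclideanSpace ℝ (Fin n))) volume := by
    have h1 : fderiv ℝ (convolution f ρ (ContinuousLinearMap.mul ℝ ℝ) volume)
        = convolution f (fderiv ℝ ρ)
          ((ContinuousLinearMap.mul ℝ ℝ).precompR (EuclideanSpace ℝ (Fin n))) volume :=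
      funext fun x => (hρc.hasFDerivAt_convolution_right (ContinuousLinearMap.mul ℝ ℝ) hfl
        (hρ.of_le (mod_cast le_top)) x).fderiv
    rw [h1]
    exact funext fun x => ((hρc.fderiv ℝ).hasFDerivAt_convolution_right _ hfl
      ((hρ.fderiv_right (m := (⊤:ℕ∞)) (mod_cast le_top)).of_le (mod_cast le_top)) x).fderiv
  have hρ'2 : Continuous (fderiv ℝ (fderiv ℝ ρ)) :=
    (((hρ.fderiv_right (m := (⊤:ℕ∞)) (mod_cast le_top)).fderiv_right
      (m := (0:ℕ∞)) (mod_cast le_top))).continuous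
  have hρ'2c : HasCompactSupport (fderiv ℝ (fderiv ℝ ρ)) := (hρc.fderiv ℝ).fderiv ℝ
  rw [lap_eq]
  have step : ∀ i : Fin n,
      fderiv ℝ (fderiv ℝ (convolution f ρ (ContinuousLinearMap.mul ℝ ℝ) volume)) x
        (EuclideanSpace.single i (1:ℝ)) (EuclideanSpace.single i (1:ℝ))
      = ∫ t, f t * (fderiv ℝ (fderiv ℝ ρ) (x - t) (EuclideanSpace.single i (1:ℝ))
          (EuclideanSpace.single i (1:ℝ))) := by
    intro i
    rw [hfd2]
    rw [convolution_precompR_apply _ hfl hρ'2c hρ'2 x (EuclideanSpace.single i (1:ℝ))]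
    have hg1c : HasCompactSupport (fun a => fderiv ℝ (fderiv ℝ ρ) a (EuclideanSpace.single i (1:ℝ))) :=
      hρ'2c.comp_left (g := fun M : (EuclideanSpace ℝ (Fin n)) →L[ℝ]
        ((EuclideanSpace ℝ (Fin n)) →L[ℝ] ℝ) => M (EuclideanSpace.single i (1:ℝ))) rfl
    have hg1 : Continuous (fun a => fderiv ℝ (fderiv ℝ ρ) a (EuclideanSpace.single i (1:ℝ))) :=
      ((ContinuousLinearMap.apply ℝ ((EuclideanSpace ℝ (Fin n)) →L[ℝ] ℝ)
        (EuclideanSpace.single i (1:ℝ))).continuous).comp hρ'2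
    rw [convolution_precompR_apply _ hfl hg1c hg1 x (EuclideanSpace.single i (1:ℝ))]
    rfl
  rw [Finset.sum_congr rfl fun i _ => step i]
  rw [← integral_finset_sum]
  · congr 1
    funext t
    rw [lap_eq, Finset.mul_sum]
  · intro i _
    have hgc : HasCompactSupport (fun a => fderiv ℝ (fderiv ℝ ρ) a (EuclideanSpace.single i (1:ℝ))
        (EuclideanSpace.single i (1:ℝ))) :=
      hρ'2c.comp_left (g := fun M : (EuclideanSpace ℝ (Fin n)) →L[ℝ]
        ((EuclideanSpace ℝ (Fin n)) →L[ℝ] ℝ) => M (EuclideanSpace.single i (1:ℝ))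
          (EuclideanSpace.single i (1:ℝ))) rfl
    have hgcont : Continuous (fun a => fderiv ℝ (fderiv ℝ ρ) a (EuclideanSpace.single i (1:ℝ))
        (EuclideanSpace.single i (1:ℝ))) := by
      exact ((ContinuousLinearMap.apply ℝ ℝ (EuclideanSpace.single i (1:ℝ))).continuous).comp
        (((ContinuousLinearMap.apply ℝ ((EuclideanSpace ℝ (Fin n)) →L[ℝ] ℝ)
          (EuclideanSpace.single i (1:ℝ))).continuous).comp hρ'2)
    exact hgc.convolutionExists_right (ContinuousLinearMap.mul ℝ ℝ) hfl hgcont x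
end Conv

variable {f ρ : EuclideanSpace ℝ (Fin n) → ℝ}

lemma conv_bound {r : ℝ} (hr : 1 < r) (hf : MemLp f (ENNReal.ofReal r) volume)
    (hρcont : Continuous ρ) (hρc : HasCompactSupport ρ) :
    ∃ C : ℝ, ∀ x, |convolution f ρ (ContinuousLinearMap.mul ℝ ℝ) volume x| ≤ C := by
  set q := r.conjExponent with hq
  have hpq : r.HolderConjugate q := .conjExponent hr
  refine ⟨(∫ t, ‖f t‖ ^ r) ^ (1/r) * (∫ s, ‖ρ s‖ ^ q) ^ (1/q), fun x => ?_⟩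
  have hgx_cont : Continuous (fun t => ρ (x - t)) :=
    hρcont.comp (continuous_const.sub continuous_id)
  have hgx_supp : HasCompactSupport (fun t => ρ (x - t)) :=
    hρc.comp_homeomorph (Homeomorph.subLeft x)
  have hgx : MemLp (fun t => ρ (x - t)) (ENNReal.ofReal q) volume :=
    hgx_cont.memLp_of_hasCompactSupport hgx_supp
  have h1 : |convolution f ρ (ContinuousLinearMap.mul ℝ ℝ) volume x|
      ≤ ∫ t, ‖f t‖ * ‖ρ (x - t)‖ := by
    rw [convolution_def]
    calc |∫ t, (ContinuousLinearMap.mul ℝ ℝ) (f t) (ρ (x - t))|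
        ≤ ∫ t, ‖(ContinuousLinearMap.mul ℝ ℝ) (f t) (ρ (x - t))‖ := by
          rw [← Real.norm_eq_abs]; exact norm_integral_le_integral_norm _
      _ = ∫ t, ‖f t‖ * ‖ρ (x - t)‖ := by
          congr 1; funext t
          simp [ContinuousLinearMap.mul_apply', norm_mul]
  have h2 := integral_mul_norm_le_Lp_mul_Lq hpq hf hgx
  have h3 : (∫ t, ‖ρ (x - t)‖ ^ q) = ∫ s, ‖ρ s‖ ^ q :=
    integral_sub_left_eq_self (fun s => ‖ρ s‖ ^ q) volume x
  calc |convolution f ρ (ContinuousLinearMap.mul ℝ ℝ) volume x|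
      ≤ ∫ t, ‖f t‖ * ‖ρ (x - t)‖ := h1
    _ ≤ (∫ t, ‖f t‖ ^ r) ^ (1/r) * (∫ t, ‖ρ (x - t)‖ ^ q) ^ (1/q) := h2
    _ = (∫ t, ‖f t‖ ^ r) ^ (1/r) * (∫ s, ‖ρ s‖ ^ q) ^ (1/q) := by rw [h3]


end Aux

/-- If `f ∈ L^r(ℝⁿ)` annihilates `{ψ - Δψ : ψ ∈ C_c^∞}`, then `f = 0` a.e. -/
theorem stmt0 (n : ℕ) (hn : 1 ≤ n) (r : ℝ) (hr : 1 < r)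
    (f : EuclideanSpace ℝ (Fin n) → ℝ)
    (hf : MemLp f (ENNReal.ofReal r) volume)
    (hann : ∀ ψ : EuclideanSpace ℝ (Fin n) → ℝ,
      ContDiff ℝ (⊤ : ℕ∞) ψ → HasCompactSupport ψ →
      ∫ x, f x * (ψ x - euclideanLaplacian ψ x) = 0) :
    f =ᵐ[volume] 0 := by
  have hfl : LocallyIntegrable f volume :=
    hf.locallyIntegrable (by exact ENNReal.one_le_ofReal.mpr hr.le)
  have main : ∀ ρ : EuclideanSpace ℝ (Fin n) → ℝ, ContDiff ℝ (⊤:ℕ∞) ρ → HasCompactSupport ρ →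
      ∀ x, convolution f ρ (ContinuousLinearMap.mul ℝ ℝ) volume x = 0 := by
    intro ρ hρ hρc
    set u := convolution f ρ (ContinuousLinearMap.mul ℝ ℝ) volume with hu
    have husm : ContDiff ℝ (⊤:ℕ∞) u :=
      hρc.contDiff_convolution_right (ContinuousLinearMap.mul ℝ ℝ) hfl hρ
    have hρ'2 : Continuous (fderiv ℝ (fderiv ℝ ρ)) :=
      (((hρ.fderiv_right (m := (⊤:ℕ∞)) (mod_cast le_top)).fderiv_right
        (m := (0:ℕ∞)) (mod_cast le_top))).continuous
    have hlapρ_eq : euclideanLaplacian ρ = (fun M : (EuclideanSpace ℝ (Fin n)) →L[ℝ]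
        ((EuclideanSpace ℝ (Fin n)) →L[ℝ] ℝ) => ∑ i : Fin n, M (EuclideanSpace.single i (1:ℝ))
          (EuclideanSpace.single i (1:ℝ))) ∘ (fderiv ℝ (fderiv ℝ ρ)) :=
      funext fun z => lap_eq ρ z
    have hlapρc : HasCompactSupport (euclideanLaplacian ρ) := by
      rw [hlapρ_eq]
      exact ((hρc.fderiv ℝ).fderiv ℝ).comp_left (by simp)
    have hlapρcont : Continuous (euclideanLaplacian ρ) := by
      rw [hlapρ_eq]
      exact (continuous_finset_sum _ fun i _ =>
        ((ContinuousLinearMap.apply ℝ ℝ (EuclideanSpace.single i (1:ℝ))).continuous).comp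
          ((ContinuousLinearMap.apply ℝ ((EuclideanSpace ℝ (Fin n)) →L[ℝ] ℝ)
            (EuclideanSpace.single i (1:ℝ))).continuous)).comp hρ'2
    have hueq : ∀ x, u x = euclideanLaplacian u x := by
      intro x
      have hψ : ContDiff ℝ (⊤:ℕ∞) (fun y => ρ (x - y)) :=
        hρ.comp (contDiff_const.sub contDiff_id)
      have hψc : HasCompactSupport (fun y => ρ (x - y)) :=
        hρc.comp_homeomorph (Homeomorph.subLeft x)
      have h0 := hann _ hψ hψc
      have hint1 : Integrable (fun y => f y * ρ (x - y)) volume :=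
        hρc.convolutionExists_right (ContinuousLinearMap.mul ℝ ℝ) hfl hρ.continuous x
      have hint2 : Integrable (fun y => f y * euclideanLaplacian ρ (x - y)) volume :=
        hlapρc.convolutionExists_right (ContinuousLinearMap.mul ℝ ℝ) hfl hlapρcont x
      have h1 : ∫ y, f y * (ρ (x - y) - euclideanLaplacian ρ (x - y)) = 0 := by
        rw [← h0]
        congr 1
        funext y
        rw [refl_lap hρ x y]
      have h2 : (∫ y, f y * ρ (x - y)) - ∫ y, f y * euclideanLaplacian ρ (x - y) = 0 := by
        rw [← integral_sub hint1 hint2, ← h1]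
        congr 1
        funext y
        ring
      have h3 : u x = ∫ y, f y * ρ (x - y) := by
        rw [hu, convolution_def]
        rfl
      rw [conv_lap hfl hρ hρc x, h3]
      linarith
    obtain ⟨C, hC⟩ := conv_bound hr hf hρ.continuous hρc
    have heq1 : ∀ x, u x = ∑ i : Fin n, fderiv ℝ (fderiv ℝ u) x
        (EuclideanSpace.single i (1:ℝ)) (EuclideanSpace.single i (1:ℝ)) := fun x => by
      rw [hueq x, lap_eq]
    have h1 : ∀ y, u y ≤ 0 :=
      liouville_half husm (fun x => (abs_le.mp (hC x)).2) heq1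
    have hfneg : fderiv ℝ (fderiv ℝ (fun x => -u x)) = fun x => -(fderiv ℝ (fderiv ℝ u) x) := by
      have e1 : fderiv ℝ (fun x => -u x) = fun x => -(fderiv ℝ u x) := funext fun x => fderiv_neg
      rw [e1]
      exact funext fun x => fderiv_neg
    have heq2 : ∀ x, (fun x => -u x) x = ∑ i : Fin n, fderiv ℝ (fderiv ℝ (fun x => -u x)) x
        (EuclideanSpace.single i (1:ℝ)) (EuclideanSpace.single i (1:ℝ)) := fun x => by
      rw [hfneg]
      simp only [ContinuousLinearMap.neg_apply]
      rw [Finset.sum_neg_distrib]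
      exact congrArg Neg.neg (heq1 x)
    have h2 : ∀ y, -u y ≤ 0 :=
      liouville_half husm.neg (fun x => neg_le.mpr (abs_le.mp (hC x)).1) heq2
    intro x
    have := h1 x
    have := h2 x
    linarith
  apply ae_eq_zero_of_integral_contDiff_smul_eq_zero hfl
  intro g hg hgc
  have hmain := main (fun y => g (-y)) (hg.comp (contDiff_id.neg))
    (hgc.comp_homeomorph (Homeomorph.neg (EuclideanSpace ℝ (Fin n)))) 0
  rw [convolution_def] at hmain
  have : ∫ t, f t * g t = 0 := by
    rw [← hmain]
    congr 1
    funext t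
    simp [ContinuousLinearMap.mul_apply']
  rw [← this]
  congr 1
  funext x
  simp [smul_eq_mul, mul_comm]
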